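/- Two-step ascent direction for quadratic loss: for ℓ(w) = ½⟨w, A w⟩ with A symmetric PSD and w₀ not in the kernel of A, the two-step ascent direction v₂ (obtained by two normalized gradient steps of size ρ/2 and renormalizing the total displacement to length ρ) satisfies ℓ(w₀ + ρ v₂) ≥ ℓ(w₀ + ρ v₁) where v₁ = A w₀/‖A w₀‖ is the single-step direction. -/

import Mathlib

open RealInnerProductSpace

set_option maxHeartbeats 1000000 in
lemma aux_cs {E : Type*} [NormedAddCommGroup E] [InnerProductSpace ℝ E]
    (T : E →ₗ[ℝ] E) (hsy : ∀ x y : E, ⟪T x, y⟫ = ⟪x, T y⟫)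
    (hp : ∀ x : E, 0 ≤ ⟪x, T x⟫) (x y : E) :
    ⟪x, T y⟫ ^ 2 ≤ ⟪x, T x⟫ * ⟪y, T y⟫ := by
  have key : ∀ t : ℝ, 0 ≤ ⟪y, T y⟫ * (t * t) + (2 * ⟪x, T y⟫) * t + ⟪x, T x⟫ := by
    intro t
    have h0 := hp (x + t • y)
    have e1 : ⟪y, T x⟫ = ⟪x, T y⟫ := by rw [← hsy x y, real_inner_comm]
    have expand : ⟪x + t • y, T (x + t • y)⟫
        = ⟪x, T x⟫ + 2 * t * ⟪x, T y⟫ + t * t * ⟪y, T y⟫ := by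
      rw [map_add, map_smul]
      simp only [inner_add_left, inner_add_right, real_inner_smul_left,
        real_inner_smul_right, e1]
      ring
    rw [expand] at h0
    linarith
  have hdisc := discrim_le_zero key
  rw [discrim] at hdisc
  nlinarith only [hdisc]

lemma aux_scalar (X Y t : ℝ) (hX : 0 ≤ X) (hY : 0 ≤ Y) (ht : 1 ≤ t) :
    2 * X + Y ≤ 2 * (t * X) + t * (t * Y) := by
  nlinarith [mul_nonneg (sub_nonneg.mpr ht) hX,
    mul_nonneg (mul_nonneg (sub_nonneg.mpr ht) (by linarith : (0:ℝ) ≤ t + 1)) hY]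

set_option maxHeartbeats 1000000 in
lemma aux_main {E : Type*} [NormedAddCommGroup E] [InnerProductSpace ℝ E]
    (T : E →ₗ[ℝ] E) (hsy : ∀ x y : E, ⟪T x, y⟫ = ⟪x, T y⟫)
    (hp : ∀ x : E, 0 ≤ ⟪x, T x⟫)
    (w₀ : E) (hw₀ : T w₀ ≠ 0) (ρ : ℝ) (hρ : 0 < ρ)
    (v₁ : E) (hv₁ : v₁ = ‖T w₀‖⁻¹ • T w₀)
    (w₁ : E) (hw₁ : w₁ = w₀ + (ρ / 2) • v₁) (hA₁ : T w₁ ≠ 0)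
    (u₂ : E) (hu₂ : u₂ = ‖T w₁‖⁻¹ • T w₁)
    (d v₂ : E) (hd : d = (ρ / 2) • v₁ + (ρ / 2) • u₂) (hv₂ : v₂ = ‖d‖⁻¹ • d) :
    ⟪w₀ + ρ • v₁, T (w₀ + ρ • v₁)⟫ ≤ ⟪w₀ + ρ • v₂, T (w₀ + ρ • v₂)⟫ := by
  set s : ℝ := ρ / 2 with hsdef
  have hs0 : 0 < s := by rw [hsdef]; positivity
  set a : E := T w₀ with ha
  set na : ℝ := ‖a‖ with hna_def
  have hna : 0 < na := by rw [hna_def]; exact norm_pos_iff.mpr hw₀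
  have nv₁ : ‖v₁‖ = 1 := by
    rw [hv₁, hna_def, norm_smul, norm_inv, norm_norm]
    exact inv_mul_cancel₀ (norm_ne_zero_iff.mpr hw₀)
  have hvv : ⟪v₁, v₁⟫ = 1 := by
    rw [real_inner_self_eq_norm_sq, nv₁]; norm_num
  have hav₁ : a = na • v₁ := by
    rw [hv₁, smul_smul, mul_inv_cancel₀ hna.ne', one_smul]
  set g : E := T w₁ with hg
  set ng : ℝ := ‖g‖ with hng_def
  have hng : 0 < ng := by rw [hng_def]; exact norm_pos_iff.mpr hA₁
  have hgav : g = a + s • T v₁ := by rw [hg, hw₁, map_add, map_smul, ha]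
  set q₁ : ℝ := ⟪v₁, T v₁⟫ with hq₁def
  set q₂ : ℝ := ⟪T v₁, T v₁⟫ with hq₂def
  set q₃ : ℝ := ⟪T v₁, T (T v₁)⟫ with hq₃def
  have hq₁ : 0 ≤ q₁ := by rw [hq₁def]; exact hp v₁
  have hq₂ : 0 ≤ q₂ := by rw [hq₂def]; exact real_inner_self_nonneg
  have hq₃ : 0 ≤ q₃ := by rw [hq₃def]; exact hp (T v₁)
  have hTTv : ⟪v₁, T (T v₁)⟫ = q₂ := by rw [hq₂def, ← hsy]
  have hq12 : q₁ ^ 2 ≤ q₂ := by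
    have h := real_inner_mul_inner_self_le v₁ (T v₁)
    rw [hvv, one_mul, ← hq₁def, ← hq₂def] at h
    rwa [pow_two]
  have hq23 : q₂ ^ 2 ≤ q₁ * q₃ := by
    have h := aux_cs T hsy hp v₁ (T v₁)
    rwa [hTTv, ← hq₁def, ← hq₃def] at h
  have hmom : q₁ * q₂ ≤ q₃ := by
    rcases eq_or_lt_of_le hq₁ with h1 | h1
    · rw [← h1, zero_mul]; exact hq₃
    · rcases eq_or_lt_of_le hq₂ with h2 | h2
      · rw [← h2, mul_zero]; exact hq₃
      · have hpos : 0 < q₁ * q₂ := mul_pos h1 h2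
        have h3 : (q₁ * q₂) * (q₁ * q₂) ≤ q₃ * (q₁ * q₂) := by
          nlinarith only [mul_le_mul_of_nonneg_left (mul_le_mul_of_nonneg_left hq23 hq₁) hq₁,
            mul_le_mul_of_nonneg_right hq12 (mul_nonneg hq₁ hq₃)]
        exact le_of_mul_le_mul_right h3 hpos
  have hcomm : ⟪T v₁, v₁⟫ = q₁ := by rw [hq₁def, real_inner_comm]
  have hgv₁ : ⟪g, v₁⟫ = na + s * q₁ := by
    rw [hgav, hav₁, inner_add_left, real_inner_smul_left, real_inner_smul_left, hvv, hcomm]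
    ring
  have hng_ge : na + s * q₁ ≤ ng := by
    have h := real_inner_le_norm g v₁
    rw [hgv₁, nv₁, ← hng_def] at h
    simpa using h
  have nu₂ : ‖u₂‖ = 1 := by
    rw [hu₂, hng_def, norm_smul, norm_inv, norm_norm]
    exact inv_mul_cancel₀ (norm_ne_zero_iff.mpr hA₁)
  have hgu₂ : ⟪g, u₂⟫ = ng := by
    rw [hu₂, real_inner_smul_right, real_inner_self_eq_norm_sq, ← hng_def, sq,
      ← mul_assoc, inv_mul_cancel₀ hng.ne', one_mul]
  have hv₁u₂ : ⟪v₁, u₂⟫ = ng⁻¹ * (na + s * q₁) := by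
    rw [hu₂, real_inner_smul_right, real_inner_comm, hgv₁]
  have hβ : 0 < ⟪v₁, u₂⟫ := by
    rw [hv₁u₂]
    have : 0 < na + s * q₁ :=
      add_pos_of_pos_of_nonneg hna (mul_nonneg hs0.le hq₁)
    positivity
  have hv₁d : ⟪v₁, d⟫ = s * (1 + ⟪v₁, u₂⟫) := by
    rw [hd, inner_add_right, real_inner_smul_right, real_inner_smul_right, hvv]
    ring
  have hd0 : d ≠ 0 := by
    intro h
    rw [h, inner_zero_right] at hv₁d
    linarith only [hs0, mul_pos hs0 hβ, hv₁d]
  set nd : ℝ := ‖d‖ with hnd_def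
  have hnd : 0 < nd := by rw [hnd_def]; exact norm_pos_iff.mpr hd0
  have hnd_le : nd ≤ ρ := by
    calc nd ≤ ‖s • v₁‖ + ‖s • u₂‖ := by rw [hnd_def, hd]; exact norm_add_le _ _
    _ = s + s := by
        rw [norm_smul, norm_smul, nv₁, nu₂, Real.norm_eq_abs, abs_of_pos hs0]; ring
    _ = ρ := by rw [hsdef]; ring
  have hgTg : ⟪g, T g⟫ = na ^ 2 * q₁ + 2 * na * s * q₂ + s ^ 2 * q₃ := by
    rw [hgav, hav₁, map_add, map_smul, map_smul]
    simp only [inner_add_left, inner_add_right, real_inner_smul_left, real_inner_smul_right,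
      hTTv, hcomm, ← hq₁def, ← hq₂def, ← hq₃def]
    ring
  have hng2 : ng ^ 2 = na ^ 2 + 2 * na * s * q₁ + s ^ 2 * q₂ := by
    rw [hng_def, ← real_inner_self_eq_norm_sq, hgav, hav₁]
    simp only [inner_add_left, inner_add_right, real_inner_smul_left, real_inner_smul_right,
      hvv, hcomm, ← hq₁def, ← hq₂def]
    ring
  set τ : ℝ := ⟪u₂, T u₂⟫ with hτdef
  have hτ : ng ^ 2 * τ = ⟪g, T g⟫ := by
    rw [hτdef, hu₂, map_smul, real_inner_smul_left, real_inner_smul_right]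
    field_simp
  have hτ0 : 0 ≤ τ := by rw [hτdef]; exact hp u₂
  have hτge : q₁ ≤ τ := by
    have key : ng ^ 2 * τ - ng ^ 2 * q₁
        = 2 * na * s * (q₂ - q₁ ^ 2) + s ^ 2 * (q₃ - q₁ * q₂) := by
      rw [hτ, hgTg, hng2]; ring
    have h1 : 0 ≤ 2 * na * s * (q₂ - q₁ ^ 2) := by
      apply mul_nonneg (by positivity)
      linarith
    have h2 : 0 ≤ s ^ 2 * (q₃ - q₁ * q₂) := by
      apply mul_nonneg (by positivity)
      linarith
    nlinarith only [key, h1, h2, mul_pos hng hng]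
  set H : E → ℝ := fun x => 2 * ⟪a, x⟫ + ⟪x, T x⟫ with hH
  have L1 : ∀ v : E, ⟪w₀ + v, T (w₀ + v)⟫ = ⟪w₀, T w₀⟫ + H v := by
    intro v
    have e1 : ⟪v, T w₀⟫ = ⟪a, v⟫ := by rw [real_inner_comm, ← ha]
    have e2 : ⟪w₀, T v⟫ = ⟪a, v⟫ := by rw [← hsy, ← ha]
    rw [hH, map_add]
    simp only [inner_add_left, inner_add_right, e1, e2]
    ring
  have hav : ⟪a, v₁⟫ = na := by rw [hav₁, real_inner_smul_left, hvv, mul_one]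
  have hau₂ : ⟪a, u₂⟫ = na * ⟪v₁, u₂⟫ := by rw [hav₁, real_inner_smul_left]
  have hTv₁u₂ : ⟪a, u₂⟫ + s * ⟪T v₁, u₂⟫ = ng := by
    rw [← hgu₂, hgav, inner_add_left, real_inner_smul_left]
  have hcross : ⟪v₁, T u₂⟫ = ⟪T v₁, u₂⟫ := (hsy v₁ u₂).symm
  have hcross2 : ⟪u₂, T v₁⟫ = ⟪T v₁, u₂⟫ := real_inner_comm _ _
  have Hρv₁ : H (ρ • v₁) = 2 * ρ * na + ρ ^ 2 * q₁ := by
    rw [hH]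
    simp only [map_smul, real_inner_smul_left, real_inner_smul_right, hav, ← hq₁def]
    ring
  have Hd : H d = 2 * s * na + 2 * s * ng + s ^ 2 * q₁ + s ^ 2 * τ := by
    rw [hH, hd]
    simp only [map_add, map_smul, inner_add_left, inner_add_right,
      real_inner_smul_left, real_inner_smul_right, hav, hcross, hcross2,
      ← hq₁def, ← hτdef]
    linear_combination (2 * s) * hTv₁u₂
  have hρs : ρ = 2 * s := by rw [hsdef]; ring
  have L2 : H (ρ • v₁) ≤ H d := by
    rw [Hρv₁, Hd, hρs]
    nlinarith only [mul_nonneg hs0.le (sub_nonneg.mpr hng_ge),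
      mul_nonneg (mul_nonneg hs0.le hs0.le) (sub_nonneg.mpr hτge)]
  have hρv₂ : ρ • v₂ = (ρ * nd⁻¹) • d := by rw [hv₂, smul_smul]
  have ht1 : 1 ≤ ρ * nd⁻¹ := by
    rw [← div_eq_mul_inv]
    exact (one_le_div hnd).mpr hnd_le
  have had : 0 ≤ ⟪a, d⟫ := by
    rw [hd, inner_add_right, real_inner_smul_right, real_inner_smul_right, hav, hau₂]
    exact add_nonneg (mul_nonneg hs0.le hna.le)
      (mul_nonneg hs0.le (mul_nonneg hna.le hβ.le))
  have hdTd : 0 ≤ ⟪d, T d⟫ := hp d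
  have L3 : H d ≤ H (ρ • v₂) := by
    rw [hρv₂, hH]
    simp only [map_smul, real_inner_smul_left, real_inner_smul_right]
    exact aux_scalar _ _ _ had hdTd ht1
  rw [L1 (ρ • v₁), L1 (ρ • v₂)]
  linarith only [L2, L3]

theorem stmt_17 {k : ℕ} (A : Matrix (Fin k) (Fin k) ℝ)
    (hsymm : A.IsSymm) (hpsd : A.PosSemidef)
    (f : EuclideanSpace ℝ (Fin k) → ℝ)
    (hf : f = fun x => (1 / 2 : ℝ) * ⟪x, Matrix.toEuclideanLin A x⟫)
    (w₀ : EuclideanSpace ℝ (Fin k)) (hw₀ : Matrix.toEuclideanLin A w₀ ≠ 0)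
    (ρ : ℝ) (hρ : 0 < ρ)
    (v₁ : EuclideanSpace ℝ (Fin k))
    (hv₁ : v₁ = ‖Matrix.toEuclideanLin A w₀‖⁻¹ • Matrix.toEuclideanLin A w₀)
    (w₁ : EuclideanSpace ℝ (Fin k)) (hw₁ : w₁ = w₀ + (ρ / 2) • v₁)
    (hA₁ : Matrix.toEuclideanLin A w₁ ≠ 0)
    (u₂ : EuclideanSpace ℝ (Fin k))
    (hu₂ : u₂ = ‖Matrix.toEuclideanLin A w₁‖⁻¹ • Matrix.toEuclideanLin A w₁)
    (d v₂ : EuclideanSpace ℝ (Fin k))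
    (hd : d = (ρ / 2) • v₁ + (ρ / 2) • u₂)
    (hv₂ : v₂ = ‖d‖⁻¹ • d) :
    f (w₀ + ρ • v₁) ≤ f (w₀ + ρ • v₂) := by
  have hsy : ∀ x y : EuclideanSpace ℝ (Fin k),
      ⟪Matrix.toEuclideanLin A x, y⟫ = ⟪x, Matrix.toEuclideanLin A y⟫ :=
    Matrix.isHermitian_iff_isSymmetric.mp hpsd.1
  have hp : ∀ x : EuclideanSpace ℝ (Fin k), 0 ≤ ⟪x, Matrix.toEuclideanLin A x⟫ := by
    intro x
    have e : ⟪x, Matrix.toEuclideanLin A x⟫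
        = dotProduct (star ((WithLp.equiv 2 _) x)) (A.mulVec ((WithLp.equiv 2 _) x)) := by
      rw [EuclideanSpace.inner_eq_star_dotProduct, dotProduct_comm]; rfl
    rw [e]
    exact hpsd.dotProduct_mulVec_nonneg _
  have key := aux_main (Matrix.toEuclideanLin A) hsy hp w₀ hw₀ ρ hρ v₁ hv₁ w₁ hw₁ hA₁
    u₂ hu₂ d v₂ hd hv₂
  rw [hf]
  simp only
  linarith only [key]
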